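/- arXiv:1104.2282 — 4 statements merged into one kernel-verified Lean document; each statement's English description precedes it below -/
import Mathlib

section
/- Let A be an n×n matrix over a commutative ring. For 1 ≤ k ≤ n−1 and indices i, j with k < i, j ≤ n, the following (Sylvester/bordered determinant) identity holds: p_{k-1}(A) · m_k(i,j) = m_{k-1}(k,k) · m_{k-1}(i,j) − m_{k-1}(i,k) · m_{k-1}(k,j). -/
/-- The leading principal minor of order `k` of an `n × n` matrix `A`:
the determinant of the submatrix on (1-indexed) rows `1,…,k` and columns `1,…,k`. -/
def pminor {R : Type*} [CommRing R] {n : ℕ} (A : Matrix (Fin n) (Fin n) R)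
    (k : ℕ) (h : k ≤ n) : R :=
  (A.submatrix (Fin.castLE h) (Fin.castLE h)).det

/-- Index map selecting (0-indexed) rows `0,…,k-1` followed by `i`. -/
def bIdx {n : ℕ} (k : ℕ) (h : k ≤ n) (i : Fin n) : Fin (k + 1) → Fin n :=
  fun r => if hr : (r : ℕ) < k then ⟨r, lt_of_lt_of_le hr h⟩ else i

/-- The bordered minor `m_k(i,j)` of `A`: the determinant of the `(k+1) × (k+1)`
submatrix of `A` on (1-indexed) rows `1,…,k,i` and columns `1,…,k,j`. -/
def bminor {R : Type*} [CommRing R] {n : ℕ} (A : Matrix (Fin n) (Fin n) R)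
    (k : ℕ) (h : k ≤ n) (i j : Fin n) : R :=
  (A.submatrix (bIdx k h i) (bIdx k h j)).det

open Matrix

/-- Index map `Fin (m+1) → Fin (m+2)`: identity on `0,…,m-1`, sending the last index to `m+r`. -/
def Jmap (m : ℕ) (r : Fin 2) : Fin (m + 1) → Fin (m + 2) :=
  fun a => if h : (a : ℕ) < m then ⟨a, by omega⟩ else ⟨m + r, by omega⟩

lemma field_core {K : Type*} [Field K] (m : ℕ) (M : Matrix (Fin (m+2)) (Fin (m+2)) K)
    (hE : (M.submatrix (Fin.castLE (by omega)) (Fin.castLE (by omega : m ≤ m+2))).det ≠ 0) :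
    M.det * (M.submatrix (Fin.castLE (by omega)) (Fin.castLE (by omega : m ≤ m+2))).det =
      (M.submatrix (Jmap m 0) (Jmap m 0)).det * (M.submatrix (Jmap m 1) (Jmap m 1)).det -
      (M.submatrix (Jmap m 1) (Jmap m 0)).det * (M.submatrix (Jmap m 0) (Jmap m 1)).det := by
  set E : Matrix (Fin m) (Fin m) K :=
    M.submatrix (Fin.castLE (by omega)) (Fin.castLE (by omega : m ≤ m+2)) with hEdef
  let F : Matrix (Fin m) (Fin 2) K := of fun a c => M (Fin.castLE (by omega) a) ⟨m + c, by omega⟩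
  let G : Matrix (Fin 2) (Fin m) K := of fun r b => M ⟨m + r, by omega⟩ (Fin.castLE (by omega) b)
  let H : Matrix (Fin 2) (Fin 2) K := of fun r c => M ⟨m + r, by omega⟩ ⟨m + c, by omega⟩
  haveI : Invertible E := E.invertibleOfIsUnitDet (isUnit_iff_ne_zero.mpr hE)
  let Fc : Fin 2 → Matrix (Fin m) (Fin 1) K := fun c => of fun a _ => F a c
  let Gr : Fin 2 → Matrix (Fin 1) (Fin m) K := fun r => of fun _ b => G r b
  let Hs : Fin 2 → Fin 2 → Matrix (Fin 1) (Fin 1) K := fun r c => of fun _ _ => H r c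
  have hdetM : M.det = E.det * det (H - G * ⅟E * F) := by
    rw [← Matrix.det_submatrix_equiv_self finSumFinEquiv M]
    have : M.submatrix finSumFinEquiv finSumFinEquiv = fromBlocks E F G H := by
      ext i j
      cases i with
      | inl a => cases j with
        | inl b =>
          simp [fromBlocks, hEdef]
          congr 1 <;> exact Fin.ext (by simp)
        | inr c =>
          simp [fromBlocks, F]
          congr 1 <;> exact Fin.ext (by simp)
      | inr r => cases j with
        | inl b =>
          simp [fromBlocks, G]
          congr 1 <;> exact Fin.ext (by simp)
        | inr c =>
          simp [fromBlocks, H]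
          congr 1 <;> exact Fin.ext (by simp)
    rw [this, det_fromBlocks₁₁]
  have key : ∀ r c : Fin 2, (M.submatrix (Jmap m r) (Jmap m c)).det =
      E.det * (H r c - (G * ⅟E * F) r c) := by
    intro r c
    have h1 : ((M.submatrix (Jmap m r) (Jmap m c)).submatrix finSumFinEquiv finSumFinEquiv)
        = fromBlocks E (Fc c) (Gr r) (Hs r c) := by
      ext i j
      cases i <;> cases j <;>
        simp [fromBlocks, hEdef, Fc, Gr, Hs, F, G, H, Jmap] <;>
        first
          | rfl
          | (congr 1 <;> exact Fin.ext (by simp))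
    have h2 : (M.submatrix (Jmap m r) (Jmap m c)).det
        = (fromBlocks E (Fc c) (Gr r) (Hs r c)).det := by
      rw [← h1, Matrix.det_submatrix_equiv_self]
    rw [h2, det_fromBlocks₁₁, det_fin_one]
    have hm : (Gr r * ⅟E * Fc c) 0 0 = (G * ⅟E * F) r c := by
      simp [Matrix.mul_apply, Gr, Fc, G, F]
    rw [Matrix.sub_apply, hm]
    rfl
  rw [hdetM, key, key, key, key, det_fin_two]
  simp only [Matrix.sub_apply]
  ring

lemma core {R : Type*} [CommRing R] (m : ℕ) (M : Matrix (Fin (m+2)) (Fin (m+2)) R) :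
    M.det * (M.submatrix (Fin.castLE (by omega)) (Fin.castLE (by omega : m ≤ m+2))).det =
      (M.submatrix (Jmap m 0) (Jmap m 0)).det * (M.submatrix (Jmap m 1) (Jmap m 1)).det -
      (M.submatrix (Jmap m 1) (Jmap m 0)).det * (M.submatrix (Jmap m 0) (Jmap m 1)).det := by
  -- reduce to the generic matrix over `ℤ[Xᵢⱼ]`
  let σ := MvPolynomial (Fin (m+2) × Fin (m+2)) ℤ
  let X : Matrix (Fin (m+2)) (Fin (m+2)) σ := of fun p q => MvPolynomial.X (p, q)
  have hX : X.det * (X.submatrix (Fin.castLE (by omega)) (Fin.castLE (by omega : m ≤ m+2))).det =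
      (X.submatrix (Jmap m 0) (Jmap m 0)).det * (X.submatrix (Jmap m 1) (Jmap m 1)).det -
      (X.submatrix (Jmap m 1) (Jmap m 0)).det * (X.submatrix (Jmap m 0) (Jmap m 1)).det := by
    have hdom : (X.submatrix (Fin.castLE (by omega)) (Fin.castLE (by omega : m ≤ m+2))).det
        ≠ 0 := by
      intro h0
      let ψ : σ →+* ℤ :=
        (MvPolynomial.aeval (fun pq : (Fin (m+2)) × (Fin (m+2)) =>
          if pq.1 = pq.2 then (1 : ℤ) else 0)).toRingHom
      have h1 : (X.submatrix (Fin.castLE (by omega)) (Fin.castLE (by omega : m ≤ m+2))).map ψ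
          = (1 : Matrix (Fin m) (Fin m) ℤ) := by
        ext a b
        have hx : ∀ s : Fin (m+2) × Fin (m+2),
            ψ (MvPolynomial.X s) = if s.1 = s.2 then 1 else 0 := by
          intro s
          show (MvPolynomial.aeval _) (MvPolynomial.X s) = _
          rw [MvPolynomial.aeval_X]
        by_cases hab : a = b <;>
          simp [X, Matrix.one_apply, hab, hx, Fin.castLE_inj]
      have h2 := ψ.map_det (X.submatrix (Fin.castLE (by omega)) (Fin.castLE (by omega : m ≤ m+2)))
      rw [RingHom.mapMatrix_apply, h1, h0] at h2
      simp at h2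
    let K := FractionRing σ
    apply IsFractionRing.injective σ K
    have hinj := IsFractionRing.injective σ K
    let f : σ →+* K := algebraMap σ K
    have hf : ∀ (N : Matrix (Fin (m+2)) (Fin (m+2)) σ) (p : ℕ)
        (r c : Fin p → Fin (m+2)), f ((N.submatrix r c).det) = ((N.map f).submatrix r c).det := by
      intro N p r c
      rw [Matrix.submatrix_map, f.map_det, RingHom.mapMatrix_apply]
    have hf2 : f X.det = (X.map f).det := by
      rw [f.map_det, RingHom.mapMatrix_apply]
    rw [_root_.map_mul, map_sub, _root_.map_mul, _root_.map_mul, hf2]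
    rw [hf, hf, hf, hf, hf]
    apply field_core m (X.map f)
    rw [← hf]
    exact fun h => hdom (hinj (by rw [h, map_zero]))
  let φ : σ →+* R :=
    (MvPolynomial.aeval (fun pq : (Fin (m+2)) × (Fin (m+2)) => M pq.1 pq.2)).toRingHom
  have hM : M = X.map φ := by
    ext p q
    show M p q = (MvPolynomial.aeval _) (MvPolynomial.X (p, q))
    rw [MvPolynomial.aeval_X]
  have hφ : ∀ (p : ℕ) (r c : Fin p → Fin (m+2)),
      (M.submatrix r c).det = φ ((X.submatrix r c).det) := by
    intro p r c
    rw [φ.map_det, RingHom.mapMatrix_apply, ← Matrix.submatrix_map, ← hM]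
  have hφ2 : M.det = φ X.det := by rw [φ.map_det, RingHom.mapMatrix_apply, ← hM]
  rw [hφ2, hφ, hφ, hφ, hφ, hφ, ← _root_.map_mul φ, ← _root_.map_mul φ, ← _root_.map_mul φ,
    ← map_sub φ]
  exact congrArg φ hX

/-- Sylvester/bordered determinant identity: for `1 ≤ k ≤ n-1` and (1-indexed)
indices `i, j` with `k < i, j ≤ n` (so 0-indexed `k ≤ i, j`),
`p_{k-1}(A) * m_k(i,j) = m_{k-1}(k,k) * m_{k-1}(i,j) - m_{k-1}(i,k) * m_{k-1}(k,j)`. -/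
theorem stmt0 {R : Type*} [CommRing R] {n : ℕ} (A : Matrix (Fin n) (Fin n) R)
    (k : ℕ) (hk1 : 1 ≤ k) (hkn : k < n)
    (i j : Fin n) (hi : k ≤ (i : ℕ)) (hj : k ≤ (j : ℕ)) :
    pminor A (k - 1) (by omega) * bminor A k hkn.le i j =
      bminor A (k - 1) (by omega) ⟨k - 1, by omega⟩ ⟨k - 1, by omega⟩ *
          bminor A (k - 1) (by omega) i j -
        bminor A (k - 1) (by omega) i ⟨k - 1, by omega⟩ *
          bminor A (k - 1) (by omega) ⟨k - 1, by omega⟩ j := by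
  obtain ⟨m, rfl⟩ : ∃ m, k = m + 1 := ⟨k - 1, by omega⟩
  have h1 : ∀ x : Fin n, bIdx (m+1) hkn.le x ∘ Jmap m 1 = bIdx m (by omega) x := by
    intro x; funext a
    by_cases ha : (a : ℕ) < m <;>
      simp [Jmap, bIdx, ha, Fin.ext_iff, Nat.le_of_lt]
  have h0 : ∀ x : Fin n, bIdx (m+1) hkn.le x ∘ Jmap m 0 = bIdx m (by omega) ⟨m, by omega⟩ := by
    intro x; funext a
    by_cases ha : (a : ℕ) < m <;>
      simp [Jmap, bIdx, ha, Fin.ext_iff, Nat.le_of_lt]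
  have hc : ∀ x : Fin n, bIdx (m+1) hkn.le x ∘ Fin.castLE (by omega : m ≤ m+2)
      = Fin.castLE (by omega : m ≤ n) := by
    intro x; funext a
    simp [bIdx, Fin.ext_iff, a.isLt, Nat.lt_succ_of_lt a.isLt]
  have key := core m (A.submatrix (bIdx (m+1) hkn.le i) (bIdx (m+1) hkn.le j))
  simp only [Matrix.submatrix_submatrix] at key
  rw [h1 i, h1 j, h0 i, h0 j, hc i, hc j] at key
  exact (mul_comm (pminor A (m + 1 - 1) (by omega)) (bminor A (m + 1) hkn.le i j)).trans key
end

section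
/- Chiò condensation: let n ≥ 2 and let A be an n×n matrix over a commutative ring. Define the (n−1)×(n−1) matrix B by B_{i,j} = A_{1,1}·A_{i+1,j+1} − A_{i+1,1}·A_{1,j+1} for 1 ≤ i, j ≤ n−1. Then det B = A_{1,1}^{n−2} · det A. -/
open Matrix

/-- Weak Chiò identity, valid in any commutative ring. -/
lemma chio_aux {R : Type*} [CommRing R] (m : ℕ) (A : Matrix (Fin (m + 2)) (Fin (m + 2)) R) :
    A 0 0 * (Matrix.of fun i j : Fin (m + 1) =>
        A 0 0 * A i.succ j.succ - A i.succ 0 * A 0 j.succ).det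
      = A 0 0 ^ (m + 1) * A.det := by
  set a := A 0 0 with ha
  -- D : each row i ≠ 0 multiplied by a
  set D : Matrix (Fin (m + 2)) (Fin (m + 2)) R :=
    Matrix.of fun i j => (if i = 0 then 1 else a) * A i j with hD
  -- C : row operations applied
  set C : Matrix (Fin (m + 2)) (Fin (m + 2)) R :=
    Matrix.of fun i j => if i = 0 then A i j else a * A i j - A i 0 * A 0 j with hC
  have hDdet : D.det = a ^ (m + 1) * A.det := by
    rw [hD, det_mul_column]
    congr 1
    rw [Fin.prod_univ_succ]
    simp [Fin.succ_ne_zero]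
  have hCD : C.det = D.det := by
    apply det_eq_of_forall_row_eq_smul_add_const
      (fun i => if i = 0 then 0 else -A i 0) 0 (by simp)
    intro i j
    by_cases h : i = 0 <;> simp [hC, hD, h, Fin.succ_ne_zero]
    ring
  have hCexp : C.det = a * (Matrix.of fun i j : Fin (m + 1) =>
      a * A i.succ j.succ - A i.succ 0 * A 0 j.succ).det := by
    rw [det_succ_column_zero]
    rw [Fin.sum_univ_succ]
    have h0 : ∀ i : Fin (m + 1), C i.succ 0 = 0 := by
      intro i; simp [hC, Fin.succ_ne_zero, ha]; ring
    simp only [h0, mul_zero, zero_mul, mul_zero, Finset.sum_const_zero, add_zero]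
    simp only [Fin.val_zero, pow_zero, one_mul]
    have e1 : C 0 0 = a := by simp [hC, ha]
    have e2 : C.submatrix (Fin.succAbove 0) Fin.succ = Matrix.of fun i j : Fin (m + 1) =>
        a * A i.succ j.succ - A i.succ 0 * A 0 j.succ := by
      ext i j
      simp [hC, Fin.succAbove_zero, Fin.succ_ne_zero]
    rw [e1, e2]
  rw [← hDdet, ← hCD, hCexp]

noncomputable def chioGen (m : ℕ) : Matrix (Fin (m + 2)) (Fin (m + 2))
    (MvPolynomial (Fin (m + 2) × Fin (m + 2)) ℤ) :=
  Matrix.of fun i j => MvPolynomial.X (i, j)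

lemma chio_poly (m : ℕ) :
    (Matrix.of fun i j : Fin (m + 1) =>
        chioGen m 0 0 * chioGen m i.succ j.succ -
          chioGen m i.succ 0 * chioGen m 0 j.succ).det
      = chioGen m 0 0 ^ m * (chioGen m).det := by
  have h := chio_aux m (chioGen m)
  have hG0 : chioGen m 0 0 ≠ 0 := MvPolynomial.X_ne_zero _
  apply mul_left_cancel₀ hG0
  rw [h]; ring

/-- Chiò condensation over any commutative ring, via the generic matrix. -/
lemma chio {R : Type*} [CommRing R] (m : ℕ) (A : Matrix (Fin (m + 2)) (Fin (m + 2)) R) :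
    (Matrix.of fun i j : Fin (m + 1) =>
        A 0 0 * A i.succ j.succ - A i.succ 0 * A 0 j.succ).det
      = A 0 0 ^ m * A.det := by
  set f : MvPolynomial (Fin (m + 2) × Fin (m + 2)) ℤ →+* R :=
    MvPolynomial.eval₂Hom (Int.castRingHom R) (fun p => A p.1 p.2) with hf
  have hfX : ∀ i j : Fin (m + 2), f (chioGen m i j) = A i j := by
    intro i j
    rw [hf]
    simp [chioGen, MvPolynomial.eval₂Hom_X']
  have this := congrArg f (chio_poly m)
  rw [_root_.map_mul, map_pow, f.map_det, f.map_det] at this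
  simp only [RingHom.mapMatrix_apply] at this
  have hGA : (chioGen m).map f = A := by
    ext i j; exact hfX i j
  have hBmap : (Matrix.of fun i j : Fin (m + 1) =>
      chioGen m 0 0 * chioGen m i.succ j.succ -
        chioGen m i.succ 0 * chioGen m 0 j.succ).map f =
      Matrix.of fun i j : Fin (m + 1) =>
        A 0 0 * A i.succ j.succ - A i.succ 0 * A 0 j.succ := by
    ext i j
    simp only [Matrix.map_apply, Matrix.of_apply, map_sub, _root_.map_mul, hfX]
  rw [hGA, hBmap, hfX] at this
  exact this

/-- Chiò condensation: for `n ≥ 2` and an `n × n` matrix `A` over a commutative ring,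
if `B` is the `(n-1) × (n-1)` matrix with
`B i j = A_{1,1} * A_{i+1,j+1} - A_{i+1,1} * A_{1,j+1}` (1-indexed),
then `det B = A_{1,1} ^ (n-2) * det A`. -/
theorem stmt1 {R : Type*} [CommRing R] {n : ℕ} (hn : 2 ≤ n)
    (A : Matrix (Fin n) (Fin n) R)
    (B : Matrix (Fin (n - 1)) (Fin (n - 1)) R)
    (hB : ∀ i j : Fin (n - 1),
      B i j = A ⟨0, by omega⟩ ⟨0, by omega⟩ *
            A ⟨(i : ℕ) + 1, by have := i.isLt; omega⟩ ⟨(j : ℕ) + 1, by have := j.isLt; omega⟩ -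
          A ⟨(i : ℕ) + 1, by have := i.isLt; omega⟩ ⟨0, by omega⟩ *
            A ⟨0, by omega⟩ ⟨(j : ℕ) + 1, by have := j.isLt; omega⟩) :
    B.det = A ⟨0, by omega⟩ ⟨0, by omega⟩ ^ (n - 2) * A.det := by
  obtain ⟨m, rfl⟩ : ∃ m, n = m + 2 := ⟨n - 2, by omega⟩
  have hBeq : B = Matrix.of fun i j : Fin (m + 1) =>
      A 0 0 * A i.succ j.succ - A i.succ 0 * A 0 j.succ := by
    ext i j
    rw [hB i j]
    congr 1
  rw [hBeq, chio]
  congr 1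
end

section
/- Bareiss (Chiò) fraction-free elimination computes bordered minors: let F be a field and A an n×n matrix over F whose leading principal minors p_1(A),…,p_{n−1}(A) are all nonzero. Define tableaux α^{(k)} recursively by α^{(1)}_{i,j} = A_{i,j} for all i,j, and for 1 ≤ k ≤ n−1 and i, j > k, α^{(k+1)}_{i,j} = (α^{(k)}_{k,k} · α^{(k)}_{i,j} − α^{(k)}_{i,k} · α^{(k)}_{k,j}) / α^{(k−1)}_{k−1,k−1}, where the divisor is taken to be 1 when k = 1. Then for every 1 ≤ k ≤ n and all i, j ≥ k, one has α^{(k)}_{i,j} = m_{k−1}(i,j), the determinant of the k×k submatrix of A on rows 1,…,k−1,i and columns 1,…,k−1,j. -/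
open Matrix

lemma bminor_eq {R : Type*} [CommRing R] {n : ℕ} (A : Matrix (Fin n) (Fin n) R)
    (m : ℕ) (h : m ≤ n) (x y : Fin n) (hx : m ≤ (x : ℕ)) (hy : m ≤ (y : ℕ)) :
    bminor A m h x y =
      (fromBlocks (A.submatrix (Fin.castLE h) (Fin.castLE h))
        (of fun r (_ : Fin 1) => A (Fin.castLE h r) y)
        (of fun (_ : Fin 1) s => A x (Fin.castLE h s))
        (of fun _ _ => A x y)).det := by
  rw [bminor, ← Matrix.det_submatrix_equiv_self finSumFinEquiv, Matrix.submatrix_submatrix]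
  congr 1
  ext (r | r) (s | s) <;>
    simp [bIdx, Fin.castLE, Fin.lt_iff_val_lt_val, Nat.not_lt.mpr hx, Nat.not_lt.mpr hy]

lemma submatrix_elim {R : Type*} {n : ℕ} {p q p' q' : Type*}
    (A : Matrix (Fin n) (Fin n) R) (f : p → Fin n) (g : q → Fin n)
    (f' : p' → Fin n) (g' : q' → Fin n) :
    A.submatrix (Sum.elim f g) (Sum.elim f' g') =
      fromBlocks (A.submatrix f f') (A.submatrix f g')
        (A.submatrix g f') (A.submatrix g g') := by
  ext (i | i) (j | j) <;> rfl

lemma bIdx_comp {n : ℕ} (m : ℕ) (h : m + 1 ≤ n) (z : Fin n) (hz : m + 1 ≤ (z : ℕ)) :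
    bIdx (m + 1) h z ∘ (finSumFinEquiv : Fin m ⊕ Fin 2 ≃ Fin (m + 2)) =
      Sum.elim (Fin.castLE (le_trans (Nat.le_succ m) h))
        (fun t : Fin 2 => if t = 0 then ⟨m, by omega⟩ else z) := by
  funext r
  cases r with
  | inl r =>
    simp only [Function.comp_apply, Sum.elim_inl]
    rw [bIdx, dif_pos (by simp)]
    exact Fin.ext (by simp)
  | inr t =>
    simp only [Function.comp_apply, Sum.elim_inr]
    fin_cases t
    · rw [bIdx, dif_pos (by simp)]
      exact Fin.ext (by simp)
    · rw [bIdx, dif_neg (by simp)]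
      simp

lemma bminor_succ_eq {R : Type*} [CommRing R] {n : ℕ} (A : Matrix (Fin n) (Fin n) R)
    (m : ℕ) (h : m + 1 ≤ n) (x y : Fin n) (hx : m + 1 ≤ (x : ℕ)) (hy : m + 1 ≤ (y : ℕ)) :
    bminor A (m + 1) h x y =
      (fromBlocks
        (A.submatrix (Fin.castLE (le_trans (Nat.le_succ m) h))
          (Fin.castLE (le_trans (Nat.le_succ m) h)))
        (of fun r (b : Fin 2) => A (Fin.castLE (le_trans (Nat.le_succ m) h) r)
          (if b = 0 then ⟨m, by omega⟩ else y))
        (of fun (a : Fin 2) s => A (if a = 0 then ⟨m, by omega⟩ else x)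
          (Fin.castLE (le_trans (Nat.le_succ m) h) s))
        (of fun a b => A (if a = 0 then ⟨m, by omega⟩ else x)
          (if b = 0 then ⟨m, by omega⟩ else y))).det := by
  rw [bminor, ← Matrix.det_submatrix_equiv_self
      (finSumFinEquiv : Fin m ⊕ Fin 2 ≃ Fin (m + 2)), Matrix.submatrix_submatrix,
    bIdx_comp m h x hx, bIdx_comp m h y hy, submatrix_elim]
  rfl

lemma key {F : Type*} [Field F] {m : ℕ} (B : Matrix (Fin m) (Fin m) F)
    (E : Matrix (Fin m) (Fin 2) F) (C : Matrix (Fin 2) (Fin m) F)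
    (D : Matrix (Fin 2) (Fin 2) F) (hB : B.det ≠ 0) :
    (fromBlocks B E C D).det * B.det =
      (fromBlocks B (of fun r (_ : Fin 1) => E r 0) (of fun (_ : Fin 1) s => C 0 s)
          (of fun _ _ => D 0 0)).det *
        (fromBlocks B (of fun r (_ : Fin 1) => E r 1) (of fun (_ : Fin 1) s => C 1 s)
          (of fun _ _ => D 1 1)).det -
      (fromBlocks B (of fun r (_ : Fin 1) => E r 0) (of fun (_ : Fin 1) s => C 1 s)
          (of fun _ _ => D 1 0)).det *
        (fromBlocks B (of fun r (_ : Fin 1) => E r 1) (of fun (_ : Fin 1) s => C 0 s)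
          (of fun _ _ => D 0 1)).det := by
  haveI : Invertible B := B.invertibleOfIsUnitDet (isUnit_iff_ne_zero.mpr hB)
  have hq : ∀ a b : Fin 2,
      (fromBlocks B (of fun r (_ : Fin 1) => E r b) (of fun (_ : Fin 1) s => C a s)
          (of fun _ _ => D a b)).det = B.det * (D - C * ⅟B * E) a b := by
    intro a b
    rw [det_fromBlocks₁₁]
    congr 1
    rw [det_fin_one]
    simp [Matrix.mul_apply, Matrix.sub_apply, Finset.sum_mul]
  rw [det_fromBlocks₁₁, hq, hq, hq, hq, det_fin_two]
  ring

lemma sylvester {F : Type*} [Field F] {n : ℕ} (A : Matrix (Fin n) (Fin n) F)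
    (m : ℕ) (h2 : m + 2 ≤ n) (i j : Fin n) (hi : m + 1 ≤ (i : ℕ)) (hj : m + 1 ≤ (j : ℕ))
    (hB : pminor A m (by omega) ≠ 0) :
    bminor A (m + 1) (by omega) i j * pminor A m (by omega) =
      bminor A m (by omega) ⟨m, by omega⟩ ⟨m, by omega⟩ * bminor A m (by omega) i j -
        bminor A m (by omega) i ⟨m, by omega⟩ * bminor A m (by omega) ⟨m, by omega⟩ j := by
  have hm : m ≤ n := by omega
  have h1 : m + 1 ≤ n := by omega
  set km : Fin n := ⟨m, by omega⟩ with hkm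
  have h := key (A.submatrix (Fin.castLE hm) (Fin.castLE hm))
    (of fun r b => A (Fin.castLE hm r) (if b = 0 then km else j))
    (of fun a s => A (if a = 0 then km else i) (Fin.castLE hm s))
    (of fun a b => A (if a = 0 then km else i) (if b = 0 then km else j)) hB
  rw [bminor_succ_eq A m h1 i j hi hj, bminor_eq A m hm km j (by simp [hkm]) (by omega),
    bminor_eq A m hm i km (by omega) (by simp [hkm]), bminor_eq A m hm km km (by simp [hkm]) (by simp [hkm]),
    bminor_eq A m hm i j (by omega) (by omega)]
  show _ * pminor A m hm = _
  rw [show pminor A m hm = (A.submatrix (Fin.castLE hm) (Fin.castLE hm)).det from rfl]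
  convert h using 3 <;> (congr 1 <;> ext a b <;> simp)

lemma pminor_zero {F : Type*} [CommRing F] {n : ℕ} (A : Matrix (Fin n) (Fin n) F)
    (h : 0 ≤ n) : pminor A 0 h = 1 := Matrix.det_fin_zero

lemma bminor_zero {F : Type*} [CommRing F] {n : ℕ} (A : Matrix (Fin n) (Fin n) F)
    (h : 0 ≤ n) (i j : Fin n) : bminor A 0 h i j = A i j := by
  rw [bminor, Matrix.det_fin_one]
  simp [bIdx]

lemma pminor_succ {F : Type*} [CommRing F] {n : ℕ} (A : Matrix (Fin n) (Fin n) F)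
    (m : ℕ) (h : m + 1 ≤ n) :
    pminor A (m + 1) h = bminor A m (by omega) ⟨m, by omega⟩ ⟨m, by omega⟩ := by
  have hb : ∀ z : Fin (m + 1), bIdx m (by omega) (⟨m, by omega⟩ : Fin n) z = Fin.castLE h z := by
    intro z
    rw [bIdx]
    split_ifs with hz
    · rfl
    · exact Fin.ext (by simp [Fin.castLE]; omega)
  rw [pminor, bminor]
  congr 1
  ext r s
  simp only [Matrix.submatrix_apply]
  rw [hb, hb]

/-- Bareiss (Chiò) fraction-free elimination computes bordered minors: if the
leading principal minors `p_1(A), …, p_{n-1}(A)` are nonzero and the tableaux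
`α^{(k)}` satisfy the Bareiss recursion (all indices 1-indexed, so a 1-indexed
index `i` is the 0-indexed `i - 1`), then `α^{(k)}_{i,j} = m_{k-1}(i,j)` for all
`1 ≤ k ≤ n` and `i, j ≥ k`. -/
theorem stmt3 {F : Type*} [Field F] {n : ℕ} (A : Matrix (Fin n) (Fin n) F)
    (hp : ∀ k (_ : 1 ≤ k) (_ : k ≤ n - 1), pminor A k (by omega) ≠ 0)
    (α : ℕ → Fin n → Fin n → F)
    (hinit : ∀ i j, α 1 i j = A i j)
    (hrec : ∀ k (hk1 : 1 ≤ k) (hk : k ≤ n - 1), ∀ i j : Fin n,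
      k ≤ (i : ℕ) → k ≤ (j : ℕ) →
      α (k + 1) i j =
        (α k ⟨k - 1, by omega⟩ ⟨k - 1, by omega⟩ * α k i j -
            α k i ⟨k - 1, by omega⟩ * α k ⟨k - 1, by omega⟩ j) /
          (if k = 1 then 1 else α (k - 1) ⟨k - 2, by omega⟩ ⟨k - 2, by omega⟩)) :
    ∀ k (hk1 : 1 ≤ k) (hk : k ≤ n), ∀ i j : Fin n,
      k - 1 ≤ (i : ℕ) → k - 1 ≤ (j : ℕ) →
      α k i j = bminor A (k - 1) (by omega) i j := by
  intro k
  induction k using Nat.strong_induction_on with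
  | _ k IH =>
    match k with
    | 0 => omega
    | 1 =>
      intro _ hk i j _ _
      rw [hinit, bminor_zero]
    | (M + 2) =>
      intro _ hk i j hi hj
      have hi' : M + 1 ≤ (i : ℕ) := hi
      have hj' : M + 1 ≤ (j : ℕ) := hj
      have hMn : M + 1 ≤ n - 1 := by omega
      have hne : pminor A M (by omega) ≠ 0 := by
        match M with
        | 0 => rw [pminor_zero]; exact one_ne_zero
        | (L + 1) => exact hp (L + 1) (by omega) (by omega)
      have hdiv : (if M + 1 = 1 then (1 : F)
          else α (M + 1 - 1) ⟨M + 1 - 2, by omega⟩ ⟨M + 1 - 2, by omega⟩) =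
          pminor A M (by omega) := by
        cases M with
        | zero => rw [if_pos rfl, pminor_zero]
        | succ L =>
          rw [if_neg (by omega)]
          exact (IH (L + 1) (by omega) (by omega) (by omega) ⟨L, by omega⟩ ⟨L, by omega⟩
            (le_refl L) (le_refl L)).trans (pminor_succ A L (by omega)).symm
      rw [hrec (M + 1) (by omega) hMn i j hi' hj', hdiv,
        IH (M + 1) (by omega) (by omega) (by omega) i j (by omega) (by omega),
        IH (M + 1) (by omega) (by omega) (by omega) ⟨M + 1 - 1, by omega⟩ ⟨M + 1 - 1, by omega⟩
          (le_refl _) (le_refl _),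
        IH (M + 1) (by omega) (by omega) (by omega) i ⟨M + 1 - 1, by omega⟩
          (by omega) (le_refl _),
        IH (M + 1) (by omega) (by omega) (by omega) ⟨M + 1 - 1, by omega⟩ j
          (le_refl _) (by omega),
        div_eq_iff hne]
      exact (sylvester A M (by omega) i j hi' hj' hne).symm
end

section
/- Divisibility form of the integrality of fraction-free elimination: let A be an n×n matrix over a commutative ring. For every 1 ≤ k ≤ n−1 and all indices i, j with k < i, j ≤ n, the leading principal minor p_{k-1}(A) divides m_{k-1}(k,k) · m_{k-1}(i,j) − m_{k-1}(i,k) · m_{k-1}(k,j) in the ring. -/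
open Matrix

/-- The 2×2 family of bordered determinants of a block matrix. -/
def Nm {R : Type*} [CommRing R] {s : ℕ} (B : Matrix (Fin s ⊕ Fin 2) (Fin s ⊕ Fin 2) R)
    (x y : Fin 2) : R :=
  (B.submatrix (Sum.map id fun _ : Fin 1 => x) (Sum.map id fun _ : Fin 1 => y)).det

lemma key_field {K : Type*} [Field K] {s : ℕ} (B : Matrix (Fin s ⊕ Fin 2) (Fin s ⊕ Fin 2) K)
    (hL : (B.submatrix Sum.inl Sum.inl).det ≠ 0) :
    Nm B 0 0 * Nm B 1 1 - Nm B 1 0 * Nm B 0 1 =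
      (B.submatrix Sum.inl Sum.inl).det * B.det := by
  set L : Matrix (Fin s) (Fin s) K := B.submatrix Sum.inl Sum.inl with hLdef
  haveI : Invertible L := L.invertibleOfIsUnitDet (isUnit_iff_ne_zero.2 hL)
  set Q : Matrix (Fin 2) (Fin 2) K :=
    B.toBlocks₂₂ - B.toBlocks₂₁ * ⅟L * B.toBlocks₁₂ with hQ
  have hNm : ∀ x y : Fin 2, Nm B x y = L.det * Q x y := by
    intro x y
    have hB : B.submatrix (Sum.map id fun _ : Fin 1 => x) (Sum.map id fun _ : Fin 1 => y) =
        fromBlocks L (fun p _ => B (Sum.inl p) (Sum.inr y))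
          (fun _ q => B (Sum.inr x) (Sum.inl q)) (fun _ _ => B (Sum.inr x) (Sum.inr y)) := by
      ext p q
      rcases p with p | p <;> rcases q with q | q <;> rfl
    rw [Nm, hB]
    refine (det_fromBlocks₁₁ _ _ _ _).trans ?_
    congr 1
    rw [det_fin_one]
    simp [hQ, Matrix.mul_apply, Matrix.sub_apply, Matrix.toBlocks₂₂, Matrix.toBlocks₂₁,
      Matrix.toBlocks₁₂]
    rfl
  have hBdet : B.det = L.det * Q.det := by
    conv_lhs => rw [show B = fromBlocks L B.toBlocks₁₂ B.toBlocks₂₁ B.toBlocks₂₂ from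
      (fromBlocks_toBlocks B).symm]
    rw [det_fromBlocks₁₁]
  rw [hNm, hNm, hNm, hNm, hBdet, det_fin_two]
  ring

lemma key_s6 {R : Type*} [CommRing R] {s : ℕ} (B : Matrix (Fin s ⊕ Fin 2) (Fin s ⊕ Fin 2) R) :
    Nm B 0 0 * Nm B 1 1 - Nm B 1 0 * Nm B 0 1 =
      (B.submatrix Sum.inl Sum.inl).det * B.det := by
  -- the generic matrix
  let σ := (Fin s ⊕ Fin 2) × (Fin s ⊕ Fin 2)
  let P := MvPolynomial σ ℤ
  let G : Matrix (Fin s ⊕ Fin 2) (Fin s ⊕ Fin 2) P := fun p q => MvPolynomial.X (p, q)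
  -- the identity for the generic matrix
  have hgen : Nm G 0 0 * Nm G 1 1 - Nm G 1 0 * Nm G 0 1 =
      (G.submatrix Sum.inl Sum.inl).det * G.det := by
    let K := FractionRing P
    have hinj : Function.Injective (algebraMap P K) := IsFractionRing.injective P K
    apply hinj
    have hmapNm : ∀ (M : Matrix (Fin s ⊕ Fin 2) (Fin s ⊕ Fin 2) P) (x y : Fin 2),
        algebraMap P K (Nm M x y) = Nm (M.map (algebraMap P K)) x y := by
      intro M x y
      rw [Nm, Nm, RingHom.map_det]
      rfl
    have hmapL : algebraMap P K ((G.submatrix Sum.inl Sum.inl).det) =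
        ((G.map (algebraMap P K)).submatrix Sum.inl Sum.inl).det := by
      rw [RingHom.map_det]; rfl
    have hmapD : algebraMap P K G.det = (G.map (algebraMap P K)).det := by
      rw [RingHom.map_det]; rfl
    have hLne : ((G.map (algebraMap P K)).submatrix Sum.inl Sum.inl).det ≠ 0 := by
      rw [← hmapL]
      intro h
      have h0 : (G.submatrix Sum.inl Sum.inl).det = 0 :=
        hinj (by simpa using h)
      -- evaluate variables at the identity matrix
      have := congrArg (MvPolynomial.eval (fun v : σ => if v.1 = v.2 then (1 : ℤ) else 0)) h0
      rw [RingHom.map_det, RingHom.mapMatrix_apply] at this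
      have h1 : ((G.submatrix Sum.inl Sum.inl).map
          (MvPolynomial.eval (fun v : σ => if v.1 = v.2 then (1 : ℤ) else 0))) =
          (1 : Matrix (Fin s) (Fin s) ℤ) := by
        ext p q
        simp [G, Matrix.one_apply, Matrix.submatrix, Sum.inl.injEq]
      rw [h1] at this
      simp at this
    have := key_field (G.map (algebraMap P K)) hLne
    push_cast [hmapNm, hmapL, hmapD]
    rw [this]
  -- specialize to B
  let φ : P →+* R := MvPolynomial.eval₂Hom (Int.castRingHom R) (fun v : σ => B v.1 v.2)
  have hmap : G.map φ = B := by
    ext p q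
    show φ (MvPolynomial.X (p, q)) = B p q
    rw [MvPolynomial.eval₂Hom_X']
  have := congrArg φ hgen
  rw [map_sub, _root_.map_mul, _root_.map_mul, _root_.map_mul] at this
  have hNm : ∀ x y : Fin 2, φ (Nm G x y) = Nm B x y := by
    intro x y
    rw [Nm, Nm, RingHom.map_det, ← hmap]
    rfl
  rw [hNm, hNm, hNm, hNm, RingHom.map_det, RingHom.map_det] at this
  rw [this, ← hmap]
  rfl


/-- Divisibility form of the integrality of fraction-free elimination: for any
`n × n` matrix `A` over a commutative ring, `1 ≤ k ≤ n-1`, and 1-indexed indices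
`i, j` with `k < i, j ≤ n`, the leading principal minor `p_{k-1}(A)` divides
`m_{k-1}(k,k) * m_{k-1}(i,j) - m_{k-1}(i,k) * m_{k-1}(k,j)`. -/
theorem stmt6 {R : Type*} [CommRing R] {n : ℕ} (A : Matrix (Fin n) (Fin n) R)
    (k : ℕ) (hk1 : 1 ≤ k) (hkn : k ≤ n - 1)
    (i j : Fin n) (hi : k ≤ (i : ℕ)) (hj : k ≤ (j : ℕ)) :
    pminor A (k - 1) (by omega) ∣
      bminor A (k - 1) (by omega) ⟨k - 1, by omega⟩ ⟨k - 1, by omega⟩ *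
          bminor A (k - 1) (by omega) i j -
        bminor A (k - 1) (by omega) i ⟨k - 1, by omega⟩ *
          bminor A (k - 1) (by omega) ⟨k - 1, by omega⟩ j := by
  have hs : k - 1 ≤ n := by omega
  have hun : k - 1 < n := by omega
  let u : Fin n := ⟨k - 1, hun⟩
  let gr : Fin (k - 1) ⊕ Fin 2 → Fin n := Sum.elim (fun p => Fin.castLE hs p) ![u, i]
  let gc : Fin (k - 1) ⊕ Fin 2 → Fin n := Sum.elim (fun p => Fin.castLE hs p) ![u, j]
  have hbm : ∀ a b : Fin n,
      bminor A (k - 1) hs a b =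
        (A.submatrix (Sum.elim (fun p : Fin (k - 1) => Fin.castLE hs p) (fun _ : Fin 1 => a))
          (Sum.elim (fun p : Fin (k - 1) => Fin.castLE hs p) (fun _ : Fin 1 => b))).det := by
    intro a b
    rw [bminor, ← Matrix.det_submatrix_equiv_self
      (finSumFinEquiv : Fin (k - 1) ⊕ Fin 1 ≃ Fin (k - 1 + 1)), Matrix.submatrix_submatrix]
    congr 1
    ext p q
    rcases p with p | p <;> rcases q with q | q <;>
      · simp only [Matrix.submatrix_apply, Function.comp_apply, finSumFinEquiv_apply_left,
          finSumFinEquiv_apply_right, Sum.elim_inl, Sum.elim_inr, bIdx]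
        congr 1 <;>
        · first
          | rfl
          | (rw [dif_pos (by simp [p.isLt, q.isLt])] <;> rfl)
          | (rw [dif_neg (by simp)])
          | (simp [Fin.ext_iff])
          | skip
  have hNmB : ∀ x y : Fin 2, Nm (A.submatrix gr gc) x y =
      bminor A (k - 1) hs (![u, i] x) (![u, j] y) := by
    intro x y
    rw [hbm, Nm, Matrix.submatrix_submatrix]
    congr 1
    ext p q
    rcases p with p | p <;> rcases q with q | q <;> rfl
  have hp : pminor A (k - 1) hs = ((A.submatrix gr gc).submatrix Sum.inl Sum.inl).det := rfl
  have h00 := hNmB 0 0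
  have h11 := hNmB 1 1
  have h10 := hNmB 1 0
  have h01 := hNmB 0 1
  simp only [Matrix.cons_val_zero, Matrix.cons_val_one, Matrix.head_cons] at h00 h11 h10 h01
  show pminor A (k - 1) hs ∣
    bminor A (k - 1) hs u u * bminor A (k - 1) hs i j -
      bminor A (k - 1) hs i u * bminor A (k - 1) hs u j
  rw [← h00, ← h11, ← h10, ← h01, key_s6 (A.submatrix gr gc), ← hp]
  exact dvd_mul_right _ _
end
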